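/- arXiv:1011.0658 — 8 statements merged into one kernel-verified Lean document; each statement's English description precedes it below -/
import Mathlib

section
/- For every integer g ≥ 2, the unique positive root α of x^g + x^{g-1} + ⋯ + x − 1 satisfies 1/2^{g+2} < α − 1/2 < 1/2^{g+1}. -/
/-!
For `x < 1`, multiplying by `1 - x` turns `∑_{k=1}^g x^k < 1` into `2x - 1 < x^(g+1)`, and
the sum is strictly increasing on `x ≥ 0`, so it suffices to compare `2x - 1` with `x^(g+1)`
at the two endpoints. At `x = 1/2 + 2^-(g+2)` we have `2x - 1 = 2^-(g+1) < x^(g+1)`. At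
`x = 1/2 + 2^-(g+1) = (1 + 2^-g)/2` the reverse inequality `x^(g+1) < 2x - 1 = 2^-g` amounts to
`(1 + 2^-g)^(g+1) < 2`, which follows from `(1 + t)^n ≤ exp (n t)` and
`(g+1)/2^g ≤ 1/2 < log 2` once `g ≥ 3`, and is checked directly for `g = 2`.
-/

open Finset

theorem sum_Icc_pow_mul_one_sub {R : Type*} [Ring R] (g : ℕ) (x : R) :
    (∑ k ∈ Icc 1 g, x ^ k) * (1 - x) = x - x ^ (g + 1) := by
  rw [← Ico_add_one_right_eq_Icc, geom_sum_Ico_mul_neg x (by omega), pow_one]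

section OrderedField

variable {K : Type*} [Field K] [LinearOrder K] [IsStrictOrderedRing K]

theorem sum_Icc_pow_lt_one_iff (g : ℕ) {x : K} (hx : x < 1) :
    ∑ k ∈ Icc 1 g, x ^ k < 1 ↔ 2 * x - 1 < x ^ (g + 1) := by
  rw [← mul_lt_mul_iff_left₀ (sub_pos.2 hx), one_mul, sum_Icc_pow_mul_one_sub]
  constructor <;> intro h <;> linarith

theorem one_lt_sum_Icc_pow_iff (g : ℕ) {x : K} (hx : x < 1) :
    1 < ∑ k ∈ Icc 1 g, x ^ k ↔ x ^ (g + 1) < 2 * x - 1 := by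
  rw [← mul_lt_mul_iff_left₀ (sub_pos.2 hx), one_mul, sum_Icc_pow_mul_one_sub]
  constructor <;> intro h <;> linarith

theorem strictMonoOn_sum_Icc_pow {g : ℕ} (hg : 1 ≤ g) :
    StrictMonoOn (fun x : K ↦ ∑ k ∈ Icc 1 g, x ^ k) (Set.Ici 0) := by
  intro x hx y _ hxy
  refine sum_lt_sum_of_nonempty (nonempty_Icc.2 hg) fun k hk ↦ ?_
  exact pow_lt_pow_left₀ hxy hx (by grind)

end OrderedField

theorem Real.one_add_pow_lt_two {t : ℝ} (ht : -1 ≤ t) {n : ℕ} (h : n * t < Real.log 2) :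
    (1 + t) ^ n < 2 :=
  calc (1 + t) ^ n ≤ Real.exp t ^ n :=
        pow_le_pow_left₀ (by linarith) (by linarith [Real.add_one_le_exp t]) n
    _ = Real.exp (n * t) := (Real.exp_nat_mul t n).symm
    _ < 2 := by rwa [← Real.lt_log_iff_exp_lt two_pos]

theorem Nat.two_mul_add_one_le_two_pow {n : ℕ} (hn : 3 ≤ n) : 2 * (n + 1) ≤ 2 ^ n := by
  induction n, hn using Nat.le_induction with
  | base => norm_num
  | succ n hn ih => rw [pow_succ]; omega

theorem one_add_inv_two_pow_pow_lt_two {g : ℕ} (hg : 2 ≤ g) :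
    (1 + 1 / 2 ^ g : ℝ) ^ (g + 1) < 2 := by
  obtain rfl | hg := hg.eq_or_lt
  · norm_num
  refine Real.one_add_pow_lt_two (neg_one_lt_zero.trans_le (by positivity)).le ?_
  have hpow : (2 * (g + 1) : ℝ) ≤ 2 ^ g := by exact_mod_cast Nat.two_mul_add_one_le_two_pow hg
  calc ((g + 1 : ℕ) : ℝ) * (1 / 2 ^ g) ≤ 1 / 2 := by
        rw [mul_one_div, div_le_iff₀ (by positivity)]; push_cast; linarith
    _ < Real.log 2 := by linarith [Real.log_two_gt_d9]

theorem one_div_two_pow_lt_half {n : ℕ} (hn : 2 ≤ n) : (1 / 2 ^ n : ℝ) < 1 / 2 := by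
  rw [one_div_lt_one_div (by positivity) two_pos]
  calc (2 : ℝ) = 2 ^ 1 := (pow_one 2).symm
    _ < 2 ^ n := pow_lt_pow_right₀ one_lt_two hn

theorem sum_Icc_pow_half_add_lt_one (g : ℕ) :
    ∑ k ∈ Icc 1 g, (1 / 2 + 1 / 2 ^ (g + 2) : ℝ) ^ k < 1 := by
  rw [sum_Icc_pow_lt_one_iff g (by linarith [one_div_two_pow_lt_half (n := g + 2) (by omega)])]
  calc 2 * (1 / 2 + 1 / 2 ^ (g + 2)) - 1 = (1 / 2 : ℝ) ^ (g + 1) := by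
        rw [one_div_pow, pow_succ' 2 (g + 1)]; ring
    _ < (1 / 2 + 1 / 2 ^ (g + 2)) ^ (g + 1) :=
        pow_lt_pow_left₀ (lt_add_of_pos_right _ (by positivity)) (by norm_num) (by omega)

theorem one_lt_sum_Icc_pow_half_add {g : ℕ} (hg : 2 ≤ g) :
    1 < ∑ k ∈ Icc 1 g, (1 / 2 + 1 / 2 ^ (g + 1) : ℝ) ^ k := by
  rw [one_lt_sum_Icc_pow_iff g (by linarith [one_div_two_pow_lt_half (n := g + 1) (by omega)])]
  calc (1 / 2 + 1 / 2 ^ (g + 1) : ℝ) ^ (g + 1) = (1 + 1 / 2 ^ g) ^ (g + 1) / 2 ^ (g + 1) := by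
        rw [← div_pow]; congr 1; rw [pow_succ]; field_simp
    _ < 2 / 2 ^ (g + 1) := by gcongr; exact one_add_inv_two_pow_pow_lt_two hg
    _ = 2 * (1 / 2 + 1 / 2 ^ (g + 1)) - 1 := by rw [pow_succ]; field_simp; ring

/-- The positive root `α` of `x^g + ⋯ + x − 1` satisfies
`1/2^(g+2) < α − 1/2 < 1/2^(g+1)`. -/
theorem root_near_half (g : ℕ) (hg : 2 ≤ g) (α : ℝ) (hα : 0 < α)
    (hroot : ∑ k ∈ Finset.Icc 1 g, α ^ k = 1) :
    1 / 2 ^ (g + 2) < α - 1 / 2 ∧ α - 1 / 2 < 1 / 2 ^ (g + 1) := by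
  have hmono := strictMonoOn_sum_Icc_pow (K := ℝ) (by omega : 1 ≤ g)
  have hlower :
      ∑ k ∈ Icc 1 g, (1 / 2 + 1 / 2 ^ (g + 2) : ℝ) ^ k < ∑ k ∈ Icc 1 g, α ^ k := by
    rw [hroot]; exact sum_Icc_pow_half_add_lt_one g
  have hupper :
      ∑ k ∈ Icc 1 g, α ^ k < ∑ k ∈ Icc 1 g, (1 / 2 + 1 / 2 ^ (g + 1) : ℝ) ^ k := by
    rw [hroot]; exact one_lt_sum_Icc_pow_half_add hg
  constructor
  · linarith [(hmono.lt_iff_lt (Set.mem_Ici.2 (by positivity)) hα.le).1 hlower]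
  · linarith [(hmono.lt_iff_lt hα.le (Set.mem_Ici.2 (by positivity))).1 hupper]
end

section
/- Define f_∞ : B → B on the set B of binary sequences (ℕ → 𝔽₂) not eventually constantly 1, by: find the least i with a_i = 0, add 1 to a_{i+1}, then add 1 to a_0. Then f_∞ is a bijection of B. -/
/-- The set of binary sequences not eventually constantly `1`. -/
def Bset : Set (ℕ → ZMod 2) := {a | ∀ n, ∃ m, n ≤ m ∧ a m = 0}

open Classical

/-- The Arnoux–Yoccoz exchange `f_∞`: at the least index `i` with `a i = 0`,
add `1` to `a (i+1)`; then add `1` to `a 0`. (Defined as the identity off the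
set of sequences possessing a zero digit.) -/
noncomputable def fInf (a : ℕ → ZMod 2) : ℕ → ZMod 2 :=
  if h : ∃ i, a i = 0 then
    fun n => if n = 0 then a 0 + 1
             else if n = Nat.find h + 1 then a n + 1
             else a n
  else a

/-- Prepend a digit to a binary sequence. -/
def prepend (b : ZMod 2) (a : ℕ → ZMod 2) : ℕ → ZMod 2 :=
  fun n => match n with
  | 0 => b
  | k + 1 => a k

/-!
`f_∞` is the composite of two involutions of `B`: flipping the digit right after the first
zero (which does not move the first zero), followed by flipping the digit `a 0`.
Both change only one digit, so they preserve `B`.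
-/

open Function Set

theorem Function.Involutive.bijOn {α : Type*} {f : α → α} {s : Set α} (hf : Involutive f)
    (hs : MapsTo f s s) : BijOn f s s :=
  InvOn.bijOn ⟨fun a _ => hf a, fun a _ => hf a⟩ hs hs

theorem Nat.find_eq_find_of_forall_le_iff {p q : ℕ → Prop} [DecidablePred p] [DecidablePred q]
    (hp : ∃ n, p n) (hpq : ∀ n ≤ Nat.find hp, p n ↔ q n) :
    ∃ hq : ∃ n, q n, Nat.find hq = Nat.find hp := by
  have hq : ∃ n, q n := ⟨_, (hpq _ le_rfl).1 (Nat.find_spec hp)⟩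
  refine ⟨hq, (Nat.find_eq_iff hq).2 ⟨(hpq _ le_rfl).1 (Nat.find_spec hp), fun n hn hqn => ?_⟩⟩
  exact Nat.find_min hp hn ((hpq n hn.le).2 hqn)

theorem add_single_add_single_self {ι R : Type*} [DecidableEq ι] [Ring R] [CharP R 2]
    (a : ι → R) (k : ι) :
    a + Pi.single k 1 + Pi.single k 1 = a := by
  rw [add_assoc, ← Pi.single_add, CharTwo.add_self_eq_zero, Pi.single_zero, add_zero]

theorem add_single_mem_Bset {a : ℕ → ZMod 2} (ha : a ∈ Bset) (k : ℕ) :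
    a + Pi.single k 1 ∈ Bset := by
  intro n
  obtain ⟨m, hnm, hm⟩ := ha (max n (k + 1))
  refine ⟨m, le_of_max_le_left hnm, ?_⟩
  have hmk : m ≠ k := by omega
  simp [hmk, hm]

noncomputable def flipAfterFirstZero (a : ℕ → ZMod 2) : ℕ → ZMod 2 :=
  if h : ∃ i, a i = 0 then a + Pi.single (Nat.find h + 1) 1 else a

theorem involutive_flipAfterFirstZero : Involutive flipAfterFirstZero := by
  intro a
  by_cases h : ∃ i, a i = 0
  · obtain ⟨h', hfind⟩ := Nat.find_eq_find_of_forall_le_iff h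
      (q := fun i => (a + Pi.single (Nat.find h + 1) 1 : ℕ → ZMod 2) i = 0) fun n hn => by
        have hn' : n ≠ Nat.find h + 1 := by omega
        simp [hn']
    simp only [flipAfterFirstZero, dif_pos h, dif_pos h', hfind, add_single_add_single_self]
  · simp only [flipAfterFirstZero, dif_neg h]

theorem flipAfterFirstZero_mem_Bset {a : ℕ → ZMod 2} (ha : a ∈ Bset) :
    flipAfterFirstZero a ∈ Bset := by
  unfold flipAfterFirstZero
  split_ifs
  exacts [add_single_mem_Bset ha _, ha]

theorem fInf_eq_flipAfterFirstZero_add_single {a : ℕ → ZMod 2} (h : ∃ i, a i = 0) :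
    fInf a = flipAfterFirstZero a + Pi.single 0 1 := by
  funext n
  simp only [fInf, flipAfterFirstZero, dif_pos h, Pi.add_apply, Pi.single_apply]
  split_ifs <;> simp_all

/-- `f_∞` is a bijection of `B`. -/
theorem fInf_bijOn : Set.BijOn fInf Bset Bset := by
  have hflip : BijOn flipAfterFirstZero Bset Bset :=
    involutive_flipAfterFirstZero.bijOn fun _ => flipAfterFirstZero_mem_Bset
  have hflip0 : BijOn (· + Pi.single 0 1) Bset Bset :=
    Involutive.bijOn (fun a => add_single_add_single_self a 0) fun a ha => add_single_mem_Bset ha 0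
  refine (hflip0.comp hflip).congr fun a ha => ?_
  obtain ⟨i, -, hi⟩ := ha 0
  exact (fInf_eq_flipAfterFirstZero_add_single ⟨i, hi⟩).symm
end

section
/- Let r : B → B replace a_0 with a_0 + 1. Then r conjugates f_∞ to its inverse: r ∘ f_∞ ∘ r = f_∞^{-1}, i.e., f_∞ ∘ r ∘ f_∞ = r. -/
open Classical

lemma zmod2_add2 : ∀ x : ZMod 2, x + 1 + 1 = x := by decide

lemma zmod2_ne : ∀ x : ZMod 2, x ≠ 0 → x = 1 := by decide

/-- The digit-flip `r` of the first digit conjugates `f_∞` to its inverse: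
`f_∞ ∘ r ∘ f_∞ = r` on `B`. -/
theorem r_conj (r : (ℕ → ZMod 2) → (ℕ → ZMod 2))
    (hr : ∀ a, r a = fun n => if n = 0 then a 0 + 1 else a n) :
    ∀ a ∈ Bset, fInf (r (fInf a)) = r a := by
  intro a ha
  have h : ∃ i, a i = 0 := by
    obtain ⟨m, _, hm⟩ := ha 0
    exact ⟨m, hm⟩
  set i := Nat.find h with hi
  have hai : a i = 0 := Nat.find_spec h
  have hfa : fInf a = fun n => if n = 0 then a 0 + 1
      else if n = i + 1 then a n + 1 else a n := by
    simp only [fInf, dif_pos h, ← hi]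
  set c : ℕ → ZMod 2 := fun n =>
      if n = 0 then (fInf a) 0 + 1 else (fInf a) n with hcdef
  have hrc : r (fInf a) = c := hr (fInf a)
  have hc0 : c 0 = a 0 := by
    simp [hcdef, hfa, zmod2_add2]
  have hck : ∀ k, k ≠ 0 → k ≠ i + 1 → c k = a k := by
    intro k hk0 hki
    simp [hcdef, hfa, hk0, hki]
  have hci1 : c (i + 1) = a (i + 1) + 1 := by
    simp [hcdef, hfa]
  rw [hrc]
  rcases Nat.eq_zero_or_pos i with h0 | hpos
  · -- i = 0 : a 0 = 0
    have ha0 : a 0 = 0 := h0 ▸ hai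
    have hc : ∃ j, c j = 0 := ⟨0, by rw [hc0, ha0]⟩
    have hfind : Nat.find hc = 0 := by
      rw [Nat.find_eq_zero]
      rw [hc0, ha0]
    have : fInf c = fun n => if n = 0 then c 0 + 1
        else if n = 0 + 1 then c n + 1 else c n := by
      simp only [fInf, dif_pos hc, hfind]
    rw [this, hr]
    funext n
    rcases Nat.eq_zero_or_pos n with hn0 | hn
    · simp [hn0, hc0]
    · have hn0 : n ≠ 0 := Nat.pos_iff_ne_zero.mp hn
      by_cases hn1 : n = 0 + 1
      · have hn1' : n = 1 := by omega
        subst hn1'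
        have h1 : c 1 = a 1 + 1 := by
          rw [← Nat.zero_add 1, ← h0]
          exact hci1
        simp [h1, zmod2_add2]
      · simp [hn0, hn1, hck n hn0 (by omega)]
  · -- i > 0 : a 0 = 1
    have ha0 : a 0 = 1 := zmod2_ne _ (Nat.find_min h hpos)
    have hci : c i = 0 := by
      rw [hck i (by omega) (by omega), hai]
    have hc : ∃ j, c j = 0 := ⟨i, hci⟩
    have hfind : Nat.find hc = i := by
      rw [Nat.find_eq_iff]
      refine ⟨hci, fun m hm hcm => ?_⟩
      rcases Nat.eq_zero_or_pos m with hm0 | hmp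
      · rw [hm0, hc0, ha0] at hcm
        exact one_ne_zero hcm
      · rw [hck m (by omega) (by omega)] at hcm
        exact Nat.find_min h hm hcm
    have hfc : fInf c = fun n => if n = 0 then c 0 + 1
        else if n = i + 1 then c n + 1 else c n := by
      simp only [fInf, dif_pos hc, hfind]
    rw [hfc, hr]
    funext n
    rcases Nat.eq_zero_or_pos n with hn0 | hn
    · simp [hn0, hc0, ha0]
    · have hn0 : n ≠ 0 := Nat.pos_iff_ne_zero.mp hn
      by_cases hn1 : n = i + 1
      · subst hn1
        simp [hn0, hci1, zmod2_add2]
      · simp [hn0, hn1, hck n hn0 hn1]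
end

section
/- Let h' : B → B prepend a 0 to a sequence. Then f_∞² ∘ h' ∘ f_∞ = h' on B; equivalently, h' conjugates the restriction of f_∞² (to sequences starting with 0) to f_∞^{-1}. -/
open Classical

lemma fInf_eq (a : ℕ → ZMod 2) (k : ℕ) (hk : a k = 0)
    (hmin : ∀ j, j < k → ¬ a j = 0) :
    fInf a = fun n => if n = 0 then a 0 + 1 else if n = k + 1 then a n + 1 else a n := by
  have h : ∃ i, a i = 0 := ⟨k, hk⟩
  have hfind : Nat.find h = k := (Nat.find_eq_iff h).mpr ⟨hk, hmin⟩
  unfold fInf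
  rw [dif_pos h, hfind]

/-- `f_∞² ∘ h' ∘ f_∞ = h'` on `B`, where `h'` prepends a `0`. -/
theorem hprime_conj : ∀ a ∈ Bset, fInf (fInf (prepend 0 (fInf a))) = prepend 0 a := by
  have dich : ∀ x : ZMod 2, x = 0 ∨ x = 1 := by decide
  have tw : ∀ x : ZMod 2, x + 1 + 1 = x := by decide
  intro a ha
  obtain ⟨i0, -, hi0⟩ := ha 0
  have h0 : ∃ j, a j = 0 := ⟨i0, hi0⟩
  rcases dich (a 0) with ha0 | ha0
  · -- case a 0 = 0
    have hb := fInf_eq a 0 ha0 (by omega)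
    have hc0 : prepend 0 (fInf a) 0 = (0 : ZMod 2) := rfl
    have hd := fInf_eq (prepend 0 (fInf a)) 0 hc0 (by omega)
    have hd0 : fInf (prepend 0 (fInf a)) 0 = 1 := by
      rw [hd]; simp [prepend]
    have hd1 : fInf (prepend 0 (fInf a)) 1 = 0 := by
      rw [hd]; simp only [prepend, hb]
      simp [ha0]
      decide
    have he := fInf_eq (fInf (prepend 0 (fInf a))) 1 hd1
      (by intro j hj; interval_cases j; rw [hd0]; decide)
    funext n
    rw [he]
    match n with
    | 0 => simp [hd0, prepend]; decide
    | 1 => simp [hd1, prepend, ha0]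
    | 2 =>
      simp only [show (2:ℕ) ≠ 0 by decide, show (2:ℕ) = 1 + 1 from rfl, if_false, if_pos rfl]
      rw [hd]
      simp only [show (1:ℕ)+1 ≠ 0 by decide, show ¬((1:ℕ)+1 = 0+1) by decide, if_false]
      show (prepend 0 (fInf a) (1+1)) + 1 = prepend 0 a (1+1)
      simp only [prepend, hb]
      simp [tw]
    | (k+3) =>
      simp only [show k+3 ≠ 0 by omega, show ¬(k+3 = 1+1) by omega, if_false]
      rw [hd]
      simp only [show k+3 ≠ 0 by omega, show ¬(k+3 = 0+1) by omega, if_false]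
      show (prepend 0 (fInf a) (k+2+1)) = prepend 0 a (k+2+1)
      simp only [prepend, hb]
      simp [show k+2 ≠ 0 by omega, show ¬(k+2 = 0+1) by omega]
  · -- case a 0 = 1
    have hi : a (Nat.find h0) = 0 := Nat.find_spec h0
    have hmin : ∀ j, j < Nat.find h0 → ¬ a j = 0 := fun j hj => Nat.find_min h0 hj
    set i := Nat.find h0 with hidef
    have hipos : i ≠ 0 := by
      intro h
      rw [h] at hi; rw [ha0] at hi; exact absurd hi (by decide)
    have hb := fInf_eq a i hi hmin
    have hav : ∀ n, n ≠ 0 → n ≠ i + 1 → fInf a n = a n := by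
      intro n h1 h2; rw [hb]; simp [h1, h2]
    have hc0 : prepend 0 (fInf a) 0 = (0 : ZMod 2) := rfl
    have hd := fInf_eq (prepend 0 (fInf a)) 0 hc0 (by omega)
    have hd0 : fInf (prepend 0 (fInf a)) 0 = 1 := by rw [hd]; simp [prepend]
    have hd1 : fInf (prepend 0 (fInf a)) 1 = 1 := by
      rw [hd]
      simp only [show (1:ℕ) ≠ 0 by decide, if_false, if_pos rfl]
      show (prepend 0 (fInf a) 1) + 1 = 1
      simp only [prepend, hb]
      simp [ha0]
      decide
    have hdv : ∀ k, fInf (prepend 0 (fInf a)) (k+2) = fInf a (k+1) := by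
      intro k
      rw [hd]
      simp only [show k+2 ≠ 0 by omega, show ¬(k+2 = 0+1) by omega, if_false]
      rfl
    have hz : fInf (prepend 0 (fInf a)) (i+1) = 0 := by
      obtain ⟨m, hm⟩ : ∃ m, i = m + 1 := ⟨i - 1, by omega⟩
      rw [hm, hdv m, ← hm, hav i hipos (by omega), hi]
    have hzmin : ∀ j, j < i + 1 → ¬ fInf (prepend 0 (fInf a)) j = 0 := by
      intro j hj
      match j with
      | 0 => rw [hd0]; decide
      | 1 => rw [hd1]; decide
      | (k+2) =>
        rw [hdv k, hav (k+1) (by omega) (by omega)]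
        exact hmin (k+1) (by omega)
    have he := fInf_eq (fInf (prepend 0 (fInf a))) (i+1) hz hzmin
    funext n
    rw [he]
    match n with
    | 0 =>
      simp only [if_pos rfl, hd0]
      show (1:ZMod 2) + 1 = (0:ZMod 2)
      decide
    | (k+1) =>
      simp only [show k+1 ≠ 0 by omega, if_false]
      show _ = a k
      by_cases hk : k + 1 = i + 1 + 1
      · rw [if_pos hk]
        have hk' : k = i + 1 := by omega
        subst hk'
        rw [show i + 1 + 1 = i + 1 + 1 from rfl]
        rw [hdv i]  -- i+1+1 = i+2? careful
        rw [hb]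
        simp [show i+1 ≠ 0 by omega, tw]
      · rw [if_neg hk]
        match k with
        | 0 =>
          rw [hd1, ha0]
        | (m+1) =>
          rw [hdv m, hav (m+1) (by omega) (by omega)]
end

section
/- Let h'' : B → B prepend a 1 to a sequence. Then f_∞² ∘ h'' = h'' ∘ f_∞ on B. -/
open Classical

/-- `f_∞² ∘ h'' = h'' ∘ f_∞` on `B`, where `h''` prepends a `1`. -/
theorem hdoubleprime_conj : ∀ a ∈ Bset, fInf (fInf (prepend 1 a)) = prepend 1 (fInf a) := by
  intro a ha
  obtain ⟨m, -, hm⟩ := ha 0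
  have h : ∃ i, a i = 0 := ⟨m, hm⟩
  have hi0 : a (Nat.find h) = 0 := Nat.find_spec h
  have hp : ∃ j, prepend 1 a j = 0 := ⟨Nat.find h + 1, hi0⟩
  have hfp : Nat.find hp = Nat.find h + 1 := by
    rw [Nat.find_eq_iff]
    refine ⟨hi0, ?_⟩
    intro n hn
    match n with
    | 0 => show ¬ (1 : ZMod 2) = 0; decide
    | k + 1 =>
      exact Nat.find_min h (by omega)
  have hb0 : fInf (prepend 1 a) 0 = 0 := by
    rw [fInf, dif_pos hp]
    show (1 : ZMod 2) + 1 = 0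
    decide
  have hb : ∃ j, fInf (prepend 1 a) j = 0 := ⟨0, hb0⟩
  have hfb : Nat.find hb = 0 := by
    rw [Nat.find_eq_iff]
    exact ⟨hb0, by omega⟩
  funext n
  rw [fInf, dif_pos hb, hfb]
  match n with
  | 0 =>
    simp only [if_pos rfl, hb0]
    show (0 : ZMod 2) + 1 = 1
    decide
  | 1 =>
    simp only [show (1:ℕ) ≠ 0 by omega, if_false, if_pos rfl]
    rw [fInf, dif_pos hp, hfp]
    simp only [show (1:ℕ) ≠ 0 by omega, if_false,
      show (1:ℕ) ≠ Nat.find h + 1 + 1 by omega, if_false]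
    show prepend 1 a 1 + 1 = prepend 1 (fInf a) 1
    show a 0 + 1 = fInf a 0
    rw [fInf, dif_pos h]
    simp
  | (k + 2) =>
    simp only [show k + 2 ≠ 0 by omega, if_false,
      show k + 2 ≠ 0 + 1 by omega, if_false]
    rw [fInf, dif_pos hp, hfp]
    simp only [show k + 2 ≠ 0 by omega, if_false]
    show _ = prepend 1 (fInf a) (k + 2)
    show _ = fInf a (k + 1)
    rw [fInf, dif_pos h]
    simp only [show k + 1 ≠ 0 by omega, if_false]
    by_cases hk : k = Nat.find h
    · subst hk
      simp [prepend]
    · rw [if_neg (by omega), if_neg (by omega)]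
      rfl
end

section
/- The set D of eventually-zero binary sequences is the disjoint union of the f_∞-orbit of the zero sequence 0̄ and the f_∞-orbit of the sequence 1̄0 = (1,0,0,…): every a ∈ D equals f_∞^n(0̄) or f_∞^n(1̄0) for some n ∈ ℤ, and these two orbits are disjoint. -/
open Classical

/-- The `f_∞`-orbit of `x` (over `n ∈ ℤ`), expressed using forward iterates of
the injective map `f_∞`. -/
def inOrbit (x a : ℕ → ZMod 2) : Prop :=
  ∃ n : ℕ, fInf^[n] x = a ∨ fInf^[n] a = x

namespace AY

/-- shift by two -/
def sh (a : ℕ → ZMod 2) : ℕ → ZMod 2 := fun n => a (n + 2)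

/-- digit weight -/
def Wv (b0 b1 p : ZMod 2) : ℤ :=
  if p = 0 then (if b0 = 0 then (if b1 = 0 then 0 else 1) else (if b1 = 0 then -2 else 3))
  else (if b0 = 0 then (if b1 = 0 then 3 else 2) else (if b1 = 0 then 5 else 0))

def sgn (p : ZMod 2) : ℤ := if p = 0 then 1 else -1

def parN : ℕ → (ℕ → ZMod 2) → ZMod 2
  | 0, _ => 0
  | m + 1, a => a 0 + a 1 + parN m (sh a)

def PhiN : ℕ → (ℕ → ZMod 2) → ℤ
  | 0, _ => 0
  | m + 1, a => Wv (a 0) (a 1) (parN m (sh a)) + 4 * PhiN m (sh a)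

def Supp (m : ℕ) (a : ℕ → ZMod 2) : Prop := ∀ j, 2 * m ≤ j → a j = 0

/-- the half-move: add 1 at position (least zero)+1 -/
noncomputable def hmap (a : ℕ → ZMod 2) : ℕ → ZMod 2 :=
  if h : ∃ i, a i = 0 then (fun n => if n = Nat.find h + 1 then a n + 1 else a n) else a

/-- flip position 0 -/
def fl0 (a : ℕ → ZMod 2) : ℕ → ZMod 2 := fun n => if n = 0 then a 0 + 1 else a n

lemma zcases : ∀ x : ZMod 2, x = 0 ∨ x = 1 := by decide

lemma fInf_eq (a : ℕ → ZMod 2) (h : ∃ i, a i = 0) : fInf a = fl0 (hmap a) := by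
  unfold fInf hmap fl0
  rw [dif_pos h, dif_pos h]
  funext n
  by_cases h0 : n = 0
  · subst h0
    simp [Nat.succ_ne_zero]
  · simp [h0]

lemma hmap_apply (a : ℕ → ZMod 2) (h : ∃ i, a i = 0) (n : ℕ) :
    hmap a n = if n = Nat.find h + 1 then a n + 1 else a n := by
  unfold hmap; rw [dif_pos h]

end AY

namespace AY

lemma supp_sh {m : ℕ} {a : ℕ → ZMod 2} (h : Supp (m + 1) a) : Supp m (sh a) := by
  intro j hj
  exact h (j + 2) (by omega)

lemma supp_mono {m k : ℕ} {a : ℕ → ZMod 2} (h : Supp m a) (hmk : m ≤ k) : Supp k a := by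
  intro j hj
  exact h j (by omega)

lemma sh_fl0 (a : ℕ → ZMod 2) : sh (fl0 a) = sh a := by
  funext j
  simp [sh, fl0]

lemma parN_succ : ∀ (m : ℕ) (a : ℕ → ZMod 2), Supp m a → parN (m + 1) a = parN m a := by
  intro m
  induction m with
  | zero =>
    intro a hs
    have h0 := hs 0 (by omega)
    have h1 := hs 1 (by omega)
    simp [parN, h0, h1]
  | succ m ih =>
    intro a hs
    show a 0 + a 1 + parN (m + 1) (sh a) = a 0 + a 1 + parN m (sh a)
    rw [ih (sh a) (supp_sh hs)]

lemma PhiN_succ : ∀ (m : ℕ) (a : ℕ → ZMod 2), Supp m a → PhiN (m + 1) a = PhiN m a := by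
  intro m
  induction m with
  | zero =>
    intro a hs
    have h0 := hs 0 (by omega)
    have h1 := hs 1 (by omega)
    simp [parN, PhiN, Wv, h0, h1]
  | succ m ih =>
    intro a hs
    show Wv (a 0) (a 1) (parN (m + 1) (sh a)) + 4 * PhiN (m + 1) (sh a)
        = Wv (a 0) (a 1) (parN m (sh a)) + 4 * PhiN m (sh a)
    rw [parN_succ m (sh a) (supp_sh hs), ih (sh a) (supp_sh hs)]

lemma parN_stab {m : ℕ} {a : ℕ → ZMod 2} (h : Supp m a) :
    ∀ L, m ≤ L → parN L a = parN m a := by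
  intro L hL
  induction L with
  | zero =>
    have hm0 : m = 0 := Nat.le_zero.mp hL
    subst hm0; rfl
  | succ L ih =>
    rcases Nat.eq_or_lt_of_le hL with h1 | h1
    · rw [h1]
    · have hm : m ≤ L := by omega
      rw [parN_succ L a (supp_mono h hm), ih hm]

lemma PhiN_stab {m : ℕ} {a : ℕ → ZMod 2} (h : Supp m a) :
    ∀ L, m ≤ L → PhiN L a = PhiN m a := by
  intro L hL
  induction L with
  | zero =>
    have hm0 : m = 0 := Nat.le_zero.mp hL
    subst hm0; rfl
  | succ L ih =>
    rcases Nat.eq_or_lt_of_le hL with h1 | h1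
    · rw [h1]
    · have hm : m ≤ L := by omega
      rw [PhiN_succ L a (supp_mono h hm), ih hm]

lemma Wv_fl0 : ∀ b0 b1 p : ZMod 2, Wv (b0 + 1) b1 p = Wv b0 b1 p - 2 * sgn (b0 + b1 + p) := by
  decide

lemma sgn_succ : ∀ p : ZMod 2, sgn (p + 1) = -sgn p := by decide

lemma parN_fl0 (m : ℕ) (a : ℕ → ZMod 2) : parN (m + 1) (fl0 a) = parN (m + 1) a + 1 := by
  show fl0 a 0 + fl0 a 1 + parN m (sh (fl0 a)) = a 0 + a 1 + parN m (sh a) + 1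
  rw [sh_fl0]
  show a 0 + 1 + a 1 + parN m (sh a) = a 0 + a 1 + parN m (sh a) + 1
  ring

lemma PhiN_fl0 (m : ℕ) (a : ℕ → ZMod 2) :
    PhiN (m + 1) (fl0 a) = PhiN (m + 1) a - 2 * sgn (parN (m + 1) a) := by
  show Wv (fl0 a 0) (fl0 a 1) (parN m (sh (fl0 a))) + 4 * PhiN m (sh (fl0 a))
      = Wv (a 0) (a 1) (parN m (sh a)) + 4 * PhiN m (sh a) - 2 * sgn (parN (m + 1) a)
  rw [sh_fl0]
  show Wv (a 0 + 1) (a 1) (parN m (sh a)) + 4 * PhiN m (sh a)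
      = Wv (a 0) (a 1) (parN m (sh a)) + 4 * PhiN m (sh a) - 2 * sgn (parN (m + 1) a)
  rw [Wv_fl0]
  show _ = _ - 2 * sgn (a 0 + a 1 + parN m (sh a))
  ring

end AY
namespace AY

lemma exists_zero {m : ℕ} {a : ℕ → ZMod 2} (hs : Supp m a) : ∃ i, a i = 0 :=
  ⟨2 * m, hs (2 * m) le_rfl⟩

lemma hmap_supp {m : ℕ} {a : ℕ → ZMod 2} (hs : Supp m a) : Supp (m + 1) (hmap a) := by
  have h := exists_zero hs
  intro j hj
  rw [hmap_apply a h j]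
  have hfind : Nat.find h ≤ 2 * m := Nat.find_le (hs (2 * m) le_rfl)
  rw [if_neg (by omega)]
  exact hs j (by omega)

lemma hmap0 {a : ℕ → ZMod 2} (h : ∃ i, a i = 0) (e0 : a 0 = 0) :
    hmap a = fun n => if n = 1 then a n + 1 else a n := by
  have hf : Nat.find h = 0 := Nat.find_eq_zero h |>.mpr e0
  funext n
  rw [hmap_apply a h n, hf]

lemma one_ne_zero' : (1 : ZMod 2) ≠ 0 := by decide

lemma hmap1 {a : ℕ → ZMod 2} (h : ∃ i, a i = 0) (e0 : a 0 = 1) (e1 : a 1 = 0) :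
    hmap a = fun n => if n = 2 then a n + 1 else a n := by
  have hf : Nat.find h = 1 := by
    rw [Nat.find_eq_iff]
    refine ⟨e1, ?_⟩
    intro k hk
    have : k = 0 := by omega
    rw [this, e0]
    exact one_ne_zero'
  funext n
  rw [hmap_apply a h n, hf]

lemma sh_zero {a : ℕ → ZMod 2} (h : ∃ i, a i = 0) (e0 : a 0 = 1) (e1 : a 1 = 1) :
    ∃ i, sh a i = 0 := by
  obtain ⟨i, hi⟩ := h
  match i with
  | 0 => rw [e0] at hi; exact absurd hi one_ne_zero'
  | 1 => rw [e1] at hi; exact absurd hi one_ne_zero'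
  | (j + 2) => exact ⟨j, hi⟩

lemma find_two {a : ℕ → ZMod 2} (h : ∃ i, a i = 0) (h' : ∃ i, sh a i = 0)
    (e0 : a 0 = 1) (e1 : a 1 = 1) : Nat.find h = Nat.find h' + 2 := by
  rw [Nat.find_eq_iff]
  constructor
  · exact Nat.find_spec h'
  · intro k hk
    match k with
    | 0 => rw [e0]; exact one_ne_zero'
    | 1 => rw [e1]; exact one_ne_zero'
    | (j + 2) =>
      have : j < Nat.find h' := by omega
      exact Nat.find_min h' this

lemma hmap2 {a : ℕ → ZMod 2} (h : ∃ i, a i = 0) (h' : ∃ i, sh a i = 0)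
    (e0 : a 0 = 1) (e1 : a 1 = 1) :
    hmap a 0 = a 0 ∧ hmap a 1 = a 1 ∧ sh (hmap a) = hmap (sh a) := by
  have hf := find_two h h' e0 e1
  refine ⟨?_, ?_, ?_⟩
  · rw [hmap_apply a h 0, if_neg (by omega)]
  · rw [hmap_apply a h 1, if_neg (by omega)]
  · funext j
    show hmap a (j + 2) = hmap (sh a) j
    rw [hmap_apply a h (j + 2), hmap_apply (sh a) h' j, hf]
    by_cases hj : j = Nat.find h' + 1
    · rw [if_pos (by omega), if_pos hj]
      rfl
    · rw [if_neg (by omega), if_neg hj]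
      rfl

lemma Wv_h0 : ∀ b p : ZMod 2, Wv 0 (b + 1) p = Wv 0 b p + sgn (0 + b + p) := by decide

lemma Wv_h1 : ∀ p : ZMod 2, Wv 1 0 (p + 1) = Wv 1 0 p + 7 * sgn p := by decide

lemma Wv_h2 : ∀ p : ZMod 2, Wv 1 1 (p + 1) = Wv 1 1 p - 3 * sgn p := by decide

lemma sgn_10 : ∀ p : ZMod 2, sgn (1 + 0 + p) = -sgn p := by decide

lemma sgn_11 : ∀ p : ZMod 2, sgn (1 + 1 + p) = sgn p := by decide

lemma Hlem : ∀ (m : ℕ) (a : ℕ → ZMod 2), Supp m a →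
    parN (m + 1) (hmap a) = parN (m + 1) a + 1 ∧
    PhiN (m + 1) (hmap a) = PhiN (m + 1) a + sgn (parN (m + 1) a) := by
  intro m
  induction m with
  | zero =>
    intro a hs
    have h := exists_zero hs
    have e0 : a 0 = 0 := hs 0 (by omega)
    rw [hmap0 h e0]
    set b : ℕ → ZMod 2 := fun n => if n = 1 then a n + 1 else a n with hb
    have hb0 : b 0 = a 0 := by rw [hb]; norm_num
    have hb1 : b 1 = a 1 + 1 := by rw [hb]; norm_num
    constructor
    · show b 0 + b 1 + parN 0 (sh b) = a 0 + a 1 + parN 0 (sh a) + 1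
      rw [hb0, hb1]
      show a 0 + (a 1 + 1) + 0 = a 0 + a 1 + 0 + 1
      ring
    · show Wv (b 0) (b 1) (parN 0 (sh b)) + 4 * PhiN 0 (sh b)
          = Wv (a 0) (a 1) (parN 0 (sh a)) + 4 * PhiN 0 (sh a) + sgn (parN 1 a)
      rw [hb0, hb1, e0]
      show Wv 0 (a 1 + 1) 0 + 4 * 0 = Wv 0 (a 1) 0 + 4 * 0 + sgn (a 0 + a 1 + parN 0 (sh a))
      rw [e0]
      show Wv 0 (a 1 + 1) 0 + 4 * 0 = Wv 0 (a 1) 0 + 4 * 0 + sgn (0 + a 1 + 0)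
      rw [Wv_h0 (a 1) 0]
      ring
  | succ m ih =>
    intro a hs
    have h := exists_zero hs
    rcases zcases (a 0) with e0 | e0
    · -- a 0 = 0 : flip position 1
      rw [hmap0 h e0]
      set b : ℕ → ZMod 2 := fun n => if n = 1 then a n + 1 else a n with hb
      have hb0 : b 0 = a 0 := by rw [hb]; norm_num
      have hb1 : b 1 = a 1 + 1 := by rw [hb]; norm_num
      have hsh : sh b = sh a := by
        funext j; rw [hb]; simp [sh]
      constructor
      · show b 0 + b 1 + parN (m + 1) (sh b) = a 0 + a 1 + parN (m + 1) (sh a) + 1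
        rw [hb0, hb1, hsh]
        ring
      · show Wv (b 0) (b 1) (parN (m + 1) (sh b)) + 4 * PhiN (m + 1) (sh b)
            = Wv (a 0) (a 1) (parN (m + 1) (sh a)) + 4 * PhiN (m + 1) (sh a)
              + sgn (parN (m + 2) a)
        rw [hb0, hb1, hsh, e0, Wv_h0 (a 1) (parN (m + 1) (sh a))]
        show _ = _ + sgn (a 0 + a 1 + parN (m + 1) (sh a))
        rw [e0]
        ring
    · rcases zcases (a 1) with e1 | e1
      · -- a 0 = 1, a 1 = 0 : flip position 2
        rw [hmap1 h e0 e1]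
        set b : ℕ → ZMod 2 := fun n => if n = 2 then a n + 1 else a n with hb
        have hb0 : b 0 = a 0 := by rw [hb]; norm_num
        have hb1 : b 1 = a 1 := by rw [hb]; norm_num
        have hsh : sh b = fl0 (sh a) := by
          funext j
          rw [hb]
          simp only [sh, fl0]
          by_cases hj : j = 0
          · subst hj; norm_num
          · rw [if_neg (by omega), if_neg hj]
        constructor
        · show b 0 + b 1 + parN (m + 1) (sh b) = a 0 + a 1 + parN (m + 1) (sh a) + 1
          rw [hb0, hb1, hsh, parN_fl0 m (sh a)]
          ring
        · show Wv (b 0) (b 1) (parN (m + 1) (sh b)) + 4 * PhiN (m + 1) (sh b)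
              = Wv (a 0) (a 1) (parN (m + 1) (sh a)) + 4 * PhiN (m + 1) (sh a)
                + sgn (parN (m + 2) a)
          rw [hb0, hb1, hsh, parN_fl0 m (sh a), PhiN_fl0 m (sh a), e0, e1,
            Wv_h1 (parN (m + 1) (sh a))]
          show _ = _ + sgn (a 0 + a 1 + parN (m + 1) (sh a))
          rw [e0, e1, sgn_10 (parN (m + 1) (sh a))]
          ring
      · -- a 0 = 1, a 1 = 1 : recurse
        have h' := sh_zero h e0 e1
        obtain ⟨hm0, hm1, hmsh⟩ := hmap2 h h' e0 e1
        obtain ⟨ihp, ihq⟩ := ih (sh a) (supp_sh hs)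
        constructor
        · show hmap a 0 + hmap a 1 + parN (m + 1) (sh (hmap a))
              = a 0 + a 1 + parN (m + 1) (sh a) + 1
          rw [hm0, hm1, hmsh, ihp]
          ring
        · show Wv (hmap a 0) (hmap a 1) (parN (m + 1) (sh (hmap a)))
              + 4 * PhiN (m + 1) (sh (hmap a))
              = Wv (a 0) (a 1) (parN (m + 1) (sh a)) + 4 * PhiN (m + 1) (sh a)
                + sgn (parN (m + 2) a)
          rw [hm0, hm1, hmsh, ihp, ihq, e0, e1, Wv_h2 (parN (m + 1) (sh a))]
          show _ = _ + sgn (a 0 + a 1 + parN (m + 1) (sh a))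
          rw [e0, e1, sgn_11 (parN (m + 1) (sh a))]
          ring

end AY
namespace AY

lemma two_flip : ∀ p : ZMod 2, p + 1 + 1 = p := by decide

lemma fl0_supp {m : ℕ} {a : ℕ → ZMod 2} (hs : Supp (m + 1) a) : Supp (m + 1) (fl0 a) := by
  intro j hj
  show (if j = 0 then a 0 + 1 else a j) = 0
  rw [if_neg (by omega)]
  exact hs j hj

lemma step {m : ℕ} {a : ℕ → ZMod 2} (hs : Supp m a) :
    Supp (m + 1) (fInf a) ∧ parN (m + 2) (fInf a) = parN (m + 2) a ∧
    PhiN (m + 2) (fInf a) = PhiN (m + 2) a + 3 * sgn (parN (m + 2) a) := by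
  have h := exists_zero hs
  rw [fInf_eq a h]
  have hsupp : Supp (m + 1) (hmap a) := hmap_supp hs
  obtain ⟨hp, hq⟩ := Hlem m a hs
  have hpar2 : parN (m + 2) (hmap a) = parN (m + 1) (hmap a) :=
    parN_stab hsupp (m + 2) (by omega) |>.trans (parN_stab hsupp (m + 1) le_rfl).symm
  have hphi2 : PhiN (m + 2) (hmap a) = PhiN (m + 1) (hmap a) :=
    PhiN_stab hsupp (m + 2) (by omega) |>.trans (PhiN_stab hsupp (m + 1) le_rfl).symm
  have hpa2 : parN (m + 2) a = parN (m + 1) a :=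
    parN_stab (supp_mono hs (by omega : m ≤ m + 1)) (m + 2) (by omega) |>.trans
      (parN_stab (supp_mono hs (by omega : m ≤ m + 1)) (m + 1) le_rfl).symm
  have hPa2 : PhiN (m + 2) a = PhiN (m + 1) a :=
    PhiN_stab (supp_mono hs (by omega : m ≤ m + 1)) (m + 2) (by omega) |>.trans
      (PhiN_stab (supp_mono hs (by omega : m ≤ m + 1)) (m + 1) le_rfl).symm
  refine ⟨fl0_supp hsupp, ?_, ?_⟩
  · rw [show m + 2 = (m + 1) + 1 from rfl, parN_fl0 (m + 1) (hmap a),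
      show (m + 1) + 1 = m + 2 from rfl, hpar2, hp, hpa2, two_flip]
  · have e1 : PhiN (m + 2) (fl0 (hmap a))
        = PhiN (m + 2) (hmap a) - 2 * sgn (parN (m + 2) (hmap a)) :=
      PhiN_fl0 (m + 1) (hmap a)
    rw [e1, hphi2, hpar2, hq, hp, sgn_succ, hPa2, hpa2]
    ring

end AY
namespace AY

lemma iterN (n : ℕ) : ∀ (m : ℕ) (a : ℕ → ZMod 2), Supp m a →
    Supp (m + n) (fInf^[n] a) ∧
    parN (m + n + 1) (fInf^[n] a) = parN (m + 1) a ∧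
    PhiN (m + n + 1) (fInf^[n] a) = PhiN (m + 1) a + 3 * n * sgn (parN (m + 1) a) := by
  induction n with
  | zero =>
    intro m a hs
    refine ⟨by simpa using hs, by simp, by simp⟩
  | succ n ih =>
    intro m a hs
    obtain ⟨hsn, hpn, hqn⟩ := ih m a hs
    obtain ⟨hs1, hp1, hq1⟩ := step hsn
    rw [Function.iterate_succ_apply']
    have hb := hsn
    have hpar_st : parN (m + n + 2) (fInf^[n] a) = parN (m + n + 1) (fInf^[n] a) :=
      (parN_stab hb (m + n + 2) (by omega)).trans (parN_stab hb (m + n + 1) (by omega)).symm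
    have hphi_st : PhiN (m + n + 2) (fInf^[n] a) = PhiN (m + n + 1) (fInf^[n] a) :=
      (PhiN_stab hb (m + n + 2) (by omega)).trans (PhiN_stab hb (m + n + 1) (by omega)).symm
    have e2 : m + n + 2 = m + (n + 1) + 1 := by omega
    refine ⟨by rw [show m + (n + 1) = m + n + 1 from by omega]; exact hs1, ?_, ?_⟩
    · rw [← e2, hp1, hpar_st, hpn]
    · rw [← e2, hq1, hphi_st, hqn, hpar_st, hpn]
      push_cast
      ring

lemma WvInj : ∀ a0 a1 pa b0 b1 pb : ZMod 2, a0 + a1 + pa = b0 + b1 + pb →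
    (Wv a0 a1 pa - Wv b0 b1 pb) % 4 = 0 → a0 = b0 ∧ a1 = b1 ∧ pa = pb := by
  decide

lemma injN : ∀ (m : ℕ) (a b : ℕ → ZMod 2), Supp m a → Supp m b →
    parN m a = parN m b → PhiN m a = PhiN m b → a = b := by
  intro m
  induction m with
  | zero =>
    intro a b hsa hsb _ _
    funext j
    rw [hsa j (by omega), hsb j (by omega)]
  | succ m ih =>
    intro a b hsa hsb hpar hphi
    have hpar' : a 0 + a 1 + parN m (sh a) = b 0 + b 1 + parN m (sh b) := hpar
    have hphi' : Wv (a 0) (a 1) (parN m (sh a)) + 4 * PhiN m (sh a)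
        = Wv (b 0) (b 1) (parN m (sh b)) + 4 * PhiN m (sh b) := hphi
    have hmod : (Wv (a 0) (a 1) (parN m (sh a)) - Wv (b 0) (b 1) (parN m (sh b))) % 4 = 0 := by
      omega
    obtain ⟨h0, h1, hp⟩ := WvInj _ _ _ _ _ _ hpar' hmod
    have hx : PhiN m (sh a) = PhiN m (sh b) := by
      rw [h0, h1, hp] at hphi'
      omega
    have hsh : sh a = sh b := ih (sh a) (sh b) (supp_sh hsa) (supp_sh hsb) hp hx
    funext j
    match j with
    | 0 => exact h0
    | 1 => exact h1
    | (k + 2) => exact congrFun hsh k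

lemma Wv_mod3 : ∀ b0 b1 p : ZMod 2,
    (Wv b0 b1 p + (if p = 0 then (0:ℤ) else 1) - (if b0 + b1 + p = 0 then (0:ℤ) else 1)) % 3
      = 0 := by decide

lemma mod3 : ∀ (m : ℕ) (a : ℕ → ZMod 2),
    PhiN m a % 3 = (if parN m a = 0 then (0:ℤ) else 1) := by
  intro m
  induction m with
  | zero =>
    intro a
    simp [PhiN, parN]
  | succ m ih =>
    intro a
    have hIH := ih (sh a)
    have hW := Wv_mod3 (a 0) (a 1) (parN m (sh a))
    show (Wv (a 0) (a 1) (parN m (sh a)) + 4 * PhiN m (sh a)) % 3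
        = (if a 0 + a 1 + parN m (sh a) = 0 then (0:ℤ) else 1)
    by_cases hp : parN m (sh a) = 0 <;> by_cases ht : a 0 + a 1 + parN m (sh a) = 0 <;>
      simp only [hp, ht, if_pos, if_neg, if_true, if_false] at hIH hW ⊢ <;> omega

/-- common-level injectivity -/
lemma eq_of_inv {m k : ℕ} {x y : ℕ → ZMod 2} (hsx : Supp m x) (hsy : Supp k y)
    (hp : parN (m + 1) x = parN (k + 1) y) (hq : PhiN (m + 1) x = PhiN (k + 1) y) : x = y := by
  set L := max m k with hL
  apply injN (L + 1) x y (supp_mono hsx (by omega)) (supp_mono hsy (by omega))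
  · rw [parN_stab hsx (L + 1) (by omega), parN_stab hsy (L + 1) (by omega),
      parN_stab hsx (m + 1) (by omega), parN_stab hsy (k + 1) (by omega)] at *
    exact hp
  · rw [PhiN_stab hsx (L + 1) (by omega), PhiN_stab hsy (L + 1) (by omega)]
    rw [PhiN_stab hsx (m + 1) (by omega)] at hq
    rw [PhiN_stab hsy (k + 1) (by omega)] at hq
    exact hq

end AY
namespace AY

lemma supp_z0 : Supp 0 (fun _ => (0 : ZMod 2)) := fun _ _ => rfl

lemma parN_z : ∀ m, parN m (fun _ => (0 : ZMod 2)) = 0 := by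
  intro m
  induction m with
  | zero => rfl
  | succ m ih =>
    show (0 : ZMod 2) + 0 + parN m (sh (fun _ => 0)) = 0
    have hsh : sh (fun _ => (0 : ZMod 2)) = fun _ => 0 := rfl
    rw [hsh, ih]
    decide

lemma PhiN_z : ∀ m, PhiN m (fun _ => (0 : ZMod 2)) = 0 := by
  intro m
  induction m with
  | zero => rfl
  | succ m ih =>
    show Wv 0 0 (parN m (sh (fun _ => 0))) + 4 * PhiN m (sh (fun _ => 0)) = 0
    have hsh : sh (fun _ => (0 : ZMod 2)) = fun _ => 0 := rfl
    rw [hsh, ih, parN_z]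
    decide

lemma sgn_zero : sgn 0 = 1 := rfl
lemma sgn_one : sgn 1 = -1 := by decide

lemma supp_b1 : Supp 1 (prepend 1 (fun _ => 0)) := by
  intro j hj
  match j with
  | 0 => omega
  | k + 1 => rfl

lemma parN_b1 : parN 1 (prepend 1 (fun _ => 0)) = 1 := by decide

lemma parN_b1' : parN (1 + 1) (prepend 1 (fun _ => 0)) = 1 := by decide

lemma PhiN_b1' : PhiN (1 + 1) (prepend 1 (fun _ => 0)) = -2 := by decide

end AY

open AY

/-- The set `D` of eventually-zero binary sequences is the disjoint union of the
`f_∞`-orbits of `0̄` and of `1̄0 = (1,0,0,…)`. -/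
theorem orbit_decomposition :
    ∀ a : ℕ → ZMod 2, (∃ N, ∀ n, N ≤ n → a n = 0) →
      (inOrbit (fun _ => 0) a ∨ inOrbit (prepend 1 (fun _ => 0)) a) ∧
      ¬(inOrbit (fun _ => 0) a ∧ inOrbit (prepend 1 (fun _ => 0)) a) := by
  intro a hD
  obtain ⟨N, hN⟩ := hD
  have hsa : Supp N a := fun j hj => hN j (by omega)
  constructor
  · -- coverage
    have hmod := mod3 (N + 1) a
    rcases zcases (parN (N + 1) a) with hq0 | hq1
    · -- even parity: orbit of 0̄
      rw [hq0, if_pos rfl] at hmod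
      left
      by_cases hv : 0 ≤ PhiN (N + 1) a
      · obtain ⟨n, hn⟩ : ∃ n : ℕ, PhiN (N + 1) a = 3 * (n : ℤ) :=
          ⟨(PhiN (N + 1) a).toNat / 3, by omega⟩
        obtain ⟨hsI, hpI, hqI⟩ := iterN n 0 (fun _ => 0) supp_z0
        refine ⟨n, Or.inl (eq_of_inv hsI hsa ?_ ?_)⟩
        · rw [hpI, parN_z, hq0]
        · rw [hqI, parN_z, PhiN_z, sgn_zero, hn]
          ring
      · obtain ⟨n, hn⟩ : ∃ n : ℕ, PhiN (N + 1) a + 3 * (n : ℤ) = 0 :=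
          ⟨(-PhiN (N + 1) a).toNat / 3, by omega⟩
        obtain ⟨hsI, hpI, hqI⟩ := iterN n N a hsa
        refine ⟨n, Or.inr (eq_of_inv hsI supp_z0 ?_ ?_)⟩
        · rw [hpI, parN_z, hq0]
        · rw [hqI, hq0, sgn_zero, PhiN_z]
          linarith [hn]
    · -- odd parity: orbit of 1̄0
      rw [hq1, if_neg one_ne_zero'] at hmod
      right
      by_cases hv : PhiN (N + 1) a ≤ -2
      · obtain ⟨n, hn⟩ : ∃ n : ℕ, PhiN (N + 1) a = -2 - 3 * (n : ℤ) :=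
          ⟨(-2 - PhiN (N + 1) a).toNat / 3, by omega⟩
        obtain ⟨hsI, hpI, hqI⟩ := iterN n 1 (prepend 1 (fun _ => 0)) supp_b1
        refine ⟨n, Or.inl (eq_of_inv hsI hsa ?_ ?_)⟩
        · rw [hpI, parN_b1', hq1]
        · rw [hqI, parN_b1', PhiN_b1', sgn_one, hn]
          ring
      · obtain ⟨n, hn⟩ : ∃ n : ℕ, PhiN (N + 1) a - 3 * (n : ℤ) = -2 :=
          ⟨(PhiN (N + 1) a + 2).toNat / 3, by omega⟩
        obtain ⟨hsI, hpI, hqI⟩ := iterN n N a hsa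
        refine ⟨n, Or.inr (eq_of_inv hsI supp_b1 ?_ ?_)⟩
        · rw [hpI, parN_b1', hq1]
        · rw [hqI, hq1, sgn_one, PhiN_b1']
          linarith [hn]
  · -- disjointness
    rintro ⟨⟨n1, hc1⟩, ⟨n2, hc2⟩⟩
    have E0 : ∃ m, Supp m a ∧ parN (m + 1) a = 0 := by
      rcases hc1 with hA | hB
      · obtain ⟨hsI, hpI, _⟩ := iterN n1 0 (fun _ => 0) supp_z0
        rw [hA] at hsI hpI
        exact ⟨0 + n1, hsI, by rw [hpI, parN_z]⟩
      · obtain ⟨hsI, hpI, _⟩ := iterN n1 N a hsa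
        rw [hB] at hpI
        exact ⟨N, hsa, by rw [← hpI, parN_z]⟩
    have E1 : ∃ m, Supp m a ∧ parN (m + 1) a = 1 := by
      rcases hc2 with hA | hB
      · obtain ⟨hsI, hpI, _⟩ := iterN n2 1 (prepend 1 (fun _ => 0)) supp_b1
        rw [hA] at hsI hpI
        exact ⟨1 + n2, hsI, by rw [hpI, parN_b1']⟩
      · obtain ⟨hsI, hpI, _⟩ := iterN n2 N a hsa
        rw [hB] at hpI
        refine ⟨N, hsa, ?_⟩
        rw [← hpI, parN_stab supp_b1 (N + n2 + 1) (by omega), parN_b1]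
    obtain ⟨m1, hs1, hp1⟩ := E0
    obtain ⟨m2, hs2, hp2⟩ := E1
    have t1 : parN (m1 + 1) a = parN m1 a := parN_stab hs1 (m1 + 1) (by omega)
    have t2 : parN (m2 + 1) a = parN m2 a := parN_stab hs2 (m2 + 1) (by omega)
    have u1 : parN (m1 + m2) a = parN m1 a := parN_stab hs1 (m1 + m2) (by omega)
    have u2 : parN (m1 + m2) a = parN m2 a := parN_stab hs2 (m1 + m2) (by omega)
    have : (0 : ZMod 2) = 1 := by rw [← hp1, ← hp2, t1, t2, ← u1, ← u2]
    exact absurd this (by decide)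
end

section
/- For an eventually-zero binary sequence a in the disjoint-orbit decomposition of D, the orbit containing a (among the four possibilities O^+(0̄), O^-(0̄), O^+(1̄0), O^-(1̄0)) is determined by TM(a) ∈ 𝔽₂ and the parity of Ind(a), where Ind(a) is the largest index of a nonzero digit (0 if a = 0̄). Specifically, if a ∉ {0̄, 1̄0}: TM(a)=0 and Ind(a) even ⇒ a ∈ O^-(0̄); TM(a)=0 and Ind(a) odd ⇒ a ∈ O^+(0̄); TM(a)=1 and Ind(a) even ⇒ a ∈ O^+(1̄0); TM(a)=1 and Ind(a) odd ⇒ a ∈ O^-(1̄0). -/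
open Classical

/-- The forward orbit `O⁺(x) = {f_∞ⁿ(x) : n ≥ 1}`. -/
def forwardOrbit (x : ℕ → ZMod 2) : Set (ℕ → ZMod 2) :=
  {a | ∃ n, 1 ≤ n ∧ fInf^[n] x = a}

/-- The backward orbit `O⁻(x) = {f_∞⁻ⁿ(x) : n ≥ 1}`. -/
def backwardOrbit (x : ℕ → ZMod 2) : Set (ℕ → ZMod 2) :=
  {a | ∃ n, 1 ≤ n ∧ fInf^[n] a = x}

namespace AY

abbrev Seq := ℕ → ZMod 2

def zs : Seq := fun _ => 0
def os : Seq := prepend 1 zs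

def flip0 (a : Seq) : Seq := fun n => if n = 0 then a 0 + 1 else a n

lemma zmod2_cases (x : ZMod 2) : x = 0 ∨ x = 1 := by revert x; decide

lemma add_one_one (x : ZMod 2) : x + 1 + 1 = x := by
  have h : (1 : ZMod 2) + 1 = 0 := by decide
  rw [add_assoc, h, add_zero]

@[simp] lemma prepend_zero (b : ZMod 2) (a : Seq) : prepend b a 0 = b := rfl
@[simp] lemma prepend_succ (b : ZMod 2) (a : Seq) (n : ℕ) : prepend b a (n+1) = a n := rfl

lemma flip0_flip0 (a : Seq) : flip0 (flip0 a) = a := by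
  funext n
  cases n with
  | zero => simp [flip0, add_one_one]
  | succ m => simp [flip0]

lemma flip0_prepend (b : ZMod 2) (a : Seq) : flip0 (prepend b a) = prepend (b+1) a := by
  funext n
  cases n with
  | zero => simp [flip0]
  | succ m => simp [flip0]

lemma flip0_zs : flip0 zs = os := by
  funext n
  cases n with
  | zero => simp [flip0, zs, os]
  | succ m => simp [flip0, zs, os]

lemma flip0_os : flip0 os = zs := by
  rw [← flip0_zs, flip0_flip0]

lemma K1 (a : Seq) : fInf (prepend 0 a) = prepend 1 (flip0 a) := by
  have h : ∃ i, prepend 0 a i = 0 := ⟨0, rfl⟩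
  have hf : Nat.find h = 0 := (Nat.find_eq_zero h).mpr rfl
  funext n
  simp only [fInf]
  rw [dif_pos h]
  cases n with
  | zero => simp
  | succ m =>
    simp only [hf, Nat.succ_ne_zero, if_false, zero_add]
    by_cases hm : m = 0
    · subst hm; simp [flip0]
    · simp [flip0, hm]

lemma K2 (a : Seq) (h : ∃ i, a i = 0) :
    fInf (prepend 1 a) = prepend 0 (flip0 (fInf a)) := by
  have h' : ∃ i, prepend 1 a i = 0 := ⟨Nat.find h + 1, Nat.find_spec h⟩
  have hf : Nat.find h' = Nat.find h + 1 := by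
    rw [Nat.find_eq_iff]
    refine ⟨Nat.find_spec h, fun m hm => ?_⟩
    cases m with
    | zero => exact fun hc => one_ne_zero hc
    | succ j => exact Nat.find_min h (by omega)
  funext n
  simp only [fInf]
  rw [dif_pos h', dif_pos h]
  cases n with
  | zero => simp; decide
  | succ m =>
    cases m with
    | zero => simp [hf, flip0, add_one_one]
    | succ j =>
      by_cases hj : j = Nat.find h
      · simp [hf, hj, flip0]
      · simp [hf, hj, flip0]

end AY

namespace AY

def EZ (a : Seq) : Prop := ∃ N : ℕ, ∀ n, N ≤ n → a n = 0

lemma EZ_zs : EZ zs := ⟨0, fun _ _ => rfl⟩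

lemma EZ_os : EZ os := ⟨1, fun n hn => by
  cases n with
  | zero => omega
  | succ m => rfl⟩

lemma EZ.exists_zero {a : Seq} (h : EZ a) : ∃ i, a i = 0 :=
  ⟨h.choose, h.choose_spec _ le_rfl⟩

lemma EZ_prepend (b : ZMod 2) {a : Seq} (h : EZ a) : EZ (prepend b a) := by
  obtain ⟨N, hN⟩ := h
  exact ⟨N + 1, fun n hn => by
    cases n with
    | zero => omega
    | succ m => exact hN m (by omega)⟩

lemma EZ_tail {a : Seq} (h : EZ a) : EZ (fun n => a (n+1)) := by
  obtain ⟨N, hN⟩ := h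
  exact ⟨N, fun n hn => hN (n+1) (by omega)⟩

lemma EZ_flip0 {a : Seq} (h : EZ a) : EZ (flip0 a) := by
  obtain ⟨N, hN⟩ := h
  exact ⟨N + 1, fun n hn => by
    have : n ≠ 0 := by omega
    simp only [flip0, this, if_false]
    exact hN n (by omega)⟩

lemma EZ_fInf {a : Seq} (h : EZ a) : EZ (fInf a) := by
  obtain ⟨N, hN⟩ := h
  by_cases hz : ∃ i, a i = 0
  · refine ⟨N + Nat.find hz + 2, fun n hn => ?_⟩
    simp only [fInf]
    rw [dif_pos hz]
    have h1 : n ≠ 0 := by omega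
    have h2 : n ≠ Nat.find hz + 1 := by omega
    simp only [h1, h2, if_false]
    exact hN n (by omega)
  · simp only [fInf, dif_neg hz]
    exact ⟨N, hN⟩

lemma EZ_iter (n : ℕ) {a : Seq} (h : EZ a) : EZ (fInf^[n] a) := by
  induction n with
  | zero => exact h
  | succ k ih => rw [Function.iterate_succ_apply']; exact EZ_fInf ih

lemma tail_decomp (a : Seq) : a = prepend (a 0) (fun n => a (n+1)) := by
  funext n; cases n <;> rfl

lemma C2_zero (a : Seq) (h0 : a 0 = 0) :
    flip0 (fInf (flip0 (fInf a))) = a := by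
  set t : Seq := fun n => a (n+1) with ht
  have ha : a = prepend 0 t := by rw [← h0]; exact tail_decomp a
  have e2 : (1:ZMod 2) + 1 = 0 := by decide
  rw [ha, K1, flip0_prepend, e2, K1, flip0_prepend, flip0_flip0, e2]

lemma C2 (N : ℕ) : ∀ a : Seq, (∀ n, N ≤ n → a n = 0) →
    flip0 (fInf (flip0 (fInf a))) = a := by
  induction N with
  | zero =>
    intro a ha
    exact C2_zero a (ha 0 le_rfl)
  | succ k ih =>
    intro a ha
    rcases zmod2_cases (a 0) with h0 | h0
    · exact C2_zero a h0
    · set t : Seq := fun n => a (n+1) with htdef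
      have hEZt : EZ t := ⟨k, fun n hn => ha (n+1) (by omega)⟩
      have hz : ∃ i, t i = 0 := hEZt.exists_zero
      have hz2 : ∃ i, flip0 (fInf t) i = 0 := (EZ_flip0 (EZ_fInf hEZt)).exists_zero
      have ha1 : a = prepend 1 t := by rw [← h0]; exact tail_decomp a
      have e1 : (0:ZMod 2) + 1 = 1 := by decide
      rw [ha1, K2 t hz, flip0_prepend, e1, K2 _ hz2, flip0_prepend, e1,
        ih t (fun n hn => ha (n+1) (by omega))]

lemma C1 {a : Seq} (h : EZ a) : fInf (flip0 (fInf a)) = flip0 a := by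
  obtain ⟨N, hN⟩ := h
  have := congrArg flip0 (C2 N a hN)
  rwa [flip0_flip0] at this

lemma T1 {c : Seq} (h : EZ c) : fInf^[2] (prepend 0 (fInf c)) = prepend 0 c := by
  obtain ⟨N, hN⟩ := h
  have hz : ∃ i, flip0 (fInf c) i = 0 := (EZ_flip0 (EZ_fInf ⟨N, hN⟩)).exists_zero
  show fInf (fInf (prepend 0 (fInf c))) = prepend 0 c
  rw [K1, K2 _ hz, C2 N c hN]

lemma T2 (n : ℕ) : ∀ x y : Seq, EZ x → fInf^[n] x = y → fInf^[n] (flip0 y) = flip0 x := by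
  induction n with
  | zero => intro x y _ h; rw [← h]; rfl
  | succ k ih =>
    intro x y hx h
    rw [Function.iterate_succ_apply] at h
    have := ih (fInf x) y (EZ_fInf hx) h
    rw [Function.iterate_succ_apply', this, C1 hx]

lemma T3 (n : ℕ) : ∀ c b : Seq, EZ c → fInf^[n] c = b →
    fInf^[2*n] (prepend 0 b) = prepend 0 c := by
  induction n with
  | zero => intro c b _ h; rw [← h]; rfl
  | succ k ih =>
    intro c b hc h
    rw [Function.iterate_succ_apply] at h
    have hih := ih (fInf c) b (EZ_fInf hc) h
    have h2 : 2 * (k + 1) = 2 + 2 * k := by ring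
    rw [h2, Function.iterate_add_apply, hih, T1 hc]

lemma prep0_zs : prepend 0 zs = zs := by
  funext n; cases n <;> rfl

lemma fInf_prep0_os : fInf (prepend 0 os) = os := by
  rw [K1, flip0_os]; rfl

end AY

namespace AY

def Quad (b : Seq) (m : ℕ) : Prop :=
  ((∑ i ∈ Finset.range (m+1), b i) = 0 → Even m → ∃ n, 1 ≤ n ∧ fInf^[n] b = zs) ∧
  ((∑ i ∈ Finset.range (m+1), b i) = 0 → Odd m → ∃ n, 1 ≤ n ∧ fInf^[n] zs = b) ∧
  ((∑ i ∈ Finset.range (m+1), b i) = 1 → Even m → ∃ n, 1 ≤ n ∧ fInf^[n] os = b) ∧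
  ((∑ i ∈ Finset.range (m+1), b i) = 1 → Odd m → ∃ n, 1 ≤ n ∧ fInf^[n] b = os)

lemma sum_flip0 (b : Seq) (m : ℕ) :
    (∑ i ∈ Finset.range (m+1), flip0 b i) = (∑ i ∈ Finset.range (m+1), b i) + 1 := by
  rw [Finset.sum_range_succ', Finset.sum_range_succ']
  have h1 : ∀ i, flip0 b (i+1) = b (i+1) := fun i => by simp [flip0]
  simp only [h1]
  have h0 : flip0 b 0 = b 0 + 1 := by simp [flip0]
  rw [h0, ← add_assoc]

lemma quad_flip0 (b : Seq) (m : ℕ) (hEZb : EZ b) (hb : Quad b m) : Quad (flip0 b) m := by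
  obtain ⟨q1, q2, q3, q4⟩ := hb
  have hsum := sum_flip0 b m
  refine ⟨?_, ?_, ?_, ?_⟩
  · intro hS hev
    rw [hsum] at hS
    have hS' : (∑ i ∈ Finset.range (m+1), b i) = 1 := by
      rcases zmod2_cases (∑ i ∈ Finset.range (m+1), b i) with h | h
      · rw [h] at hS; exact absurd hS (by decide)
      · exact h
    obtain ⟨n, hn1, hn⟩ := q3 hS' hev
    exact ⟨n, hn1, by rw [T2 n os b EZ_os hn, flip0_os]⟩
  · intro hS hodd
    rw [hsum] at hS
    have hS' : (∑ i ∈ Finset.range (m+1), b i) = 1 := by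
      rcases zmod2_cases (∑ i ∈ Finset.range (m+1), b i) with h | h
      · rw [h] at hS; exact absurd hS (by decide)
      · exact h
    obtain ⟨n, hn1, hn⟩ := q4 hS' hodd
    exact ⟨n, hn1, by rw [← flip0_os, T2 n b os hEZb hn]⟩
  · intro hS hev
    rw [hsum] at hS
    have hS' : (∑ i ∈ Finset.range (m+1), b i) = 0 := by
      rcases zmod2_cases (∑ i ∈ Finset.range (m+1), b i) with h | h
      · exact h
      · rw [h] at hS; exact absurd hS (by decide)
    obtain ⟨n, hn1, hn⟩ := q1 hS' hev
    exact ⟨n, hn1, by rw [← flip0_zs, T2 n b zs hEZb hn]⟩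
  · intro hS hodd
    rw [hsum] at hS
    have hS' : (∑ i ∈ Finset.range (m+1), b i) = 0 := by
      rcases zmod2_cases (∑ i ∈ Finset.range (m+1), b i) with h | h
      · exact h
      · rw [h] at hS; exact absurd hS (by decide)
    obtain ⟨n, hn1, hn⟩ := q2 hS' hodd
    exact ⟨n, hn1, by rw [T2 n zs b EZ_zs hn, flip0_zs]⟩

lemma sum_prep0 (t : Seq) (k : ℕ) :
    (∑ i ∈ Finset.range (k+2), prepend 0 t i) = ∑ i ∈ Finset.range (k+1), t i := by
  rw [Finset.sum_range_succ']
  simp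

lemma quad_prep0 (t : Seq) (k : ℕ) (hEZt : EZ t) (ht : Quad t k) :
    Quad (prepend 0 t) (k+1) := by
  obtain ⟨q1, q2, q3, q4⟩ := ht
  have hsum := sum_prep0 t k
  refine ⟨?_, ?_, ?_, ?_⟩
  · intro hS hev
    rw [hsum] at hS
    have hodd : Odd k := Nat.not_even_iff_odd.mp (Nat.even_add_one.mp hev)
    obtain ⟨n, hn1, hn⟩ := q2 hS hodd
    refine ⟨2*n, by omega, ?_⟩
    rw [T3 n zs t EZ_zs hn, prep0_zs]
  · intro hS hodd
    rw [hsum] at hS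
    have hev : Even k := Nat.not_odd_iff_even.mp (Nat.odd_add_one.mp hodd)
    obtain ⟨n, hn1, hn⟩ := q1 hS hev
    refine ⟨2*n, by omega, ?_⟩
    rw [← prep0_zs, T3 n t zs hEZt hn]
  · intro hS hev
    rw [hsum] at hS
    have hodd : Odd k := Nat.not_even_iff_odd.mp (Nat.even_add_one.mp hev)
    obtain ⟨n, hn1, hn⟩ := q4 hS hodd
    have h3 := T3 n t os hEZt hn
    obtain ⟨m, hm⟩ : ∃ m, 2*n = m + 1 := ⟨2*n - 1, by omega⟩
    rw [hm, Function.iterate_succ_apply, fInf_prep0_os] at h3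
    exact ⟨m, by omega, h3⟩
  · intro hS hodd
    rw [hsum] at hS
    have hev : Even k := Nat.not_odd_iff_even.mp (Nat.odd_add_one.mp hodd)
    obtain ⟨n, hn1, hn⟩ := q3 hS hev
    have h3 := T3 n os t EZ_os hn
    refine ⟨2*n + 1, by omega, ?_⟩
    rw [Function.iterate_succ_apply', h3, fInf_prep0_os]

end AY

namespace AY

lemma quad_base : Quad (prepend 0 os) 1 := by
  have hsum : (∑ i ∈ Finset.range 2, prepend 0 os i) = 1 := by
    rw [Finset.sum_range_succ, Finset.sum_range_succ, Finset.sum_range_zero]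
    simp [os]
  refine ⟨?_, ?_, ?_, ?_⟩
  · intro hS _; rw [hsum] at hS; exact absurd hS (by decide)
  · intro hS _; rw [hsum] at hS; exact absurd hS (by decide)
  · intro _ hev; exact absurd hev (by decide)
  · intro _ _; exact ⟨1, le_rfl, fInf_prep0_os⟩

lemma classify (ind : ℕ) : ∀ a : Seq, (∀ i, ind < i → a i = 0) → (ind = 0 ∨ a ind ≠ 0) →
    a = zs ∨ a = os ∨ Quad a ind := by
  induction ind with
  | zero =>
    intro a htop _
    rcases zmod2_cases (a 0) with h0 | h0
    · left
      funext n
      cases n with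
      | zero => exact h0
      | succ m => exact htop (m+1) (by omega)
    · right; left
      funext n
      cases n with
      | zero => exact h0
      | succ m => exact htop (m+1) (by omega)
  | succ k ih =>
    intro a htop hmax
    set t : Seq := fun n => a (n+1) with htdef
    have hat : a = prepend (a 0) t := tail_decomp a
    have hmax' : a (k+1) ≠ 0 := hmax.resolve_left (Nat.succ_ne_zero k)
    have htop' : ∀ i, k < i → t i = 0 := fun i hi => htop (i+1) (by omega)
    have hEZt : EZ t := ⟨k+1, fun n hn => htop' n (by omega)⟩
    rcases ih t htop' (Or.inr hmax') with h0 | h1 | hq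
    · exact absurd (show t k = 0 by rw [h0]; rfl) hmax'
    · -- t = os, so k = 0
      have hk : k = 0 := by
        by_contra hk
        obtain ⟨j, hj⟩ : ∃ j, k = j + 1 := ⟨k - 1, by omega⟩
        apply hmax'
        show t k = 0
        rw [h1, hj]
        rfl
      subst hk
      have hQb : Quad (prepend 0 t) 1 := by rw [h1]; exact quad_base
      rcases zmod2_cases (a 0) with ha0 | ha0
      · right; right; rw [hat, ha0]; exact hQb
      · right; right
        rw [hat, ha0, show prepend 1 t = flip0 (prepend 0 t) by
          rw [flip0_prepend]; norm_num]
        exact quad_flip0 _ _ (EZ_prepend 0 hEZt) hQb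
    · have hQb : Quad (prepend 0 t) (k+1) := quad_prep0 t k hEZt hq
      rcases zmod2_cases (a 0) with ha0 | ha0
      · right; right; rw [hat, ha0]; exact hQb
      · right; right
        rw [hat, ha0, show prepend 1 t = flip0 (prepend 0 t) by
          rw [flip0_prepend]; norm_num]
        exact quad_flip0 _ _ (EZ_prepend 0 hEZt) hQb

end AY


/-- The orbit containing an eventually-zero sequence `a ∉ {0̄, 1̄0}` is determined
by the Thue–Morse parity `TM(a)` and the parity of `Ind(a)`. -/
theorem orbit_classification (a : ℕ → ZMod 2) (N : ℕ) (hN : ∀ n, N ≤ n → a n = 0)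
    (ind : ℕ) (hind_top : ∀ i, ind < i → a i = 0) (hind_max : ind = 0 ∨ a ind ≠ 0)
    (ha0 : a ≠ fun _ => 0) (ha1 : a ≠ prepend 1 (fun _ => 0)) :
    ((∑ i ∈ Finset.range N, a i) = 0 → Even ind → a ∈ backwardOrbit (fun _ => 0)) ∧
    ((∑ i ∈ Finset.range N, a i) = 0 → Odd ind → a ∈ forwardOrbit (fun _ => 0)) ∧
    ((∑ i ∈ Finset.range N, a i) = 1 → Even ind → a ∈ forwardOrbit (prepend 1 (fun _ => 0))) ∧
    ((∑ i ∈ Finset.range N, a i) = 1 → Odd ind → a ∈ backwardOrbit (prepend 1 (fun _ => 0))) := by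
  rcases AY.classify ind a hind_top hind_max with h | h | h
  · exact absurd h ha0
  · exact absurd h ha1
  · obtain ⟨q1, q2, q3, q4⟩ := h
    have hsum : (∑ i ∈ Finset.range N, a i) = ∑ i ∈ Finset.range (ind+1), a i := by
      have e1 : (∑ i ∈ Finset.range N, a i) = ∑ i ∈ Finset.range (max N (ind+1)), a i :=
        Finset.sum_subset (Finset.range_subset_range.mpr (le_max_left _ _))
          (fun i hi hni => hN i (by simp only [Finset.mem_range] at hi hni; omega))
      have e2 : (∑ i ∈ Finset.range (ind+1), a i) = ∑ i ∈ Finset.range (max N (ind+1)), a i :=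
        Finset.sum_subset (Finset.range_subset_range.mpr (le_max_right _ _))
          (fun i hi hni => hind_top i (by simp only [Finset.mem_range] at hi hni; omega))
      rw [e1, e2]
    rw [hsum]
    exact ⟨q1, q2, q3, q4⟩
end

section
/- With α = (√5−1)/2, M₁ = [[1,−α],[α,1]], M₂ = [[α,−1],[1,α]], and integers X, Y, Z, W with XW − YZ = 1, the matrix M₂^{-1} M₁ [[X,Y],[Z,W]] M₁^{-1} M₂ has integer entries if and only if X + 3Y + 3Z + 4W ≡ 0 (mod 5). In particular this holds whenever X ≡ W ≡ 1 and Y ≡ Z ≡ 0 (mod 5). -/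
/-!
From `α² + α = 1` one gets `M₂⁻¹ M₁ = α / (1 + α²) • Q` with `Q = [[2, 1], [-1, 2]]`, so the
matrix in question is `Q A Q⁻¹ = (Q A adj Q) / 5`, as `det Q = 5`. Modulo 5, `Q` has rank one:
`Q ≡ u vᵀ` and `adj Q ≡ v uᵀ` with `u = (1, 2)`, `v = (2, 1)`. Hence `Q A adj Q ≡ (vᵀ A v) u uᵀ`,
which vanishes iff `vᵀ A v ≡ -(X + 3Y + 3Z + 4W)` does.
-/

open Matrix

lemma inv_mul_mul_mul_inv_mul_eq_of_inv_mul_eq_smul {n K : Type*} [Fintype n] [DecidableEq n]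
    [Field K] {M₁ M₂ Q : Matrix n n K} {c : K} (hM₂ : IsUnit M₂.det) (hQ : IsUnit Q.det)
    (hc : c ≠ 0) (h : M₂⁻¹ * M₁ = c • Q) (A : Matrix n n K) :
    M₂⁻¹ * M₁ * A * M₁⁻¹ * M₂ = Q * A * Q⁻¹ := by
  have : Invertible c := invertibleOfNonzero hc
  have hM₁ : M₁⁻¹ * M₂ = (c • Q)⁻¹ := by
    rw [← h, Matrix.mul_inv_rev, nonsing_inv_nonsing_inv _ hM₂]
  rw [mul_assoc _ M₁⁻¹, hM₁, h, inv_smul Q c hQ, invOf_eq_inv, smul_mul, smul_mul,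
    Matrix.mul_smul, smul_smul, mul_inv_cancel₀ hc, one_smul]

lemma inv_mul_eq_smul_of_sq_add_self {K : Type*} [Field K] {α : K} (hα : α ^ 2 + α = 1) :
    !![α, -1; 1, α]⁻¹ * !![1, -α; α, 1] = (α / (1 + α ^ 2)) • !![2, 1; -1, 2] := by
  have hadj : !![α, 1; -1, α] * !![1, -α; α, 1] = α • !![(2 : K), 1; -1, 2] := by
    rw [mul_fin_two, smul_of, EmbeddingLike.apply_eq_iff_eq]
    simp only [smul_cons, smul_empty, smul_eq_mul, vecCons_inj, and_true]
    exact ⟨⟨by ring, by linear_combination -hα⟩, by linear_combination hα, by ring⟩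
  rw [inv_def, det_fin_two_of, adjugate_fin_two_of, Ring.inverse_eq_inv', smul_mul]
  simp only [neg_neg, mul_one, sub_neg_eq_add, hadj, smul_smul]
  rw [div_eq_inv_mul, add_comm (1 : K), sq]

def conjTwoOne {R : Type*} [CommRing R] (A : Matrix (Fin 2) (Fin 2) R) :
    Matrix (Fin 2) (Fin 2) R :=
  !![2, 1; -1, 2] * A * !![2, -1; 1, 2]

lemma map_conjTwoOne {R S : Type*} [CommRing R] [CommRing S] (f : R →+* S)
    (A : Matrix (Fin 2) (Fin 2) R) : (conjTwoOne A).map f = conjTwoOne (A.map f) := by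
  simp only [conjTwoOne, Matrix.map_mul]
  congr <;> ext i j <;> fin_cases i <;> fin_cases j <;> simp [map_ofNat f]

lemma mul_mul_inv_eq_inv_five_smul_conjTwoOne {K : Type*} [Field K]
    (A : Matrix (Fin 2) (Fin 2) K) :
    !![2, 1; -1, 2] * A * !![2, 1; -1, 2]⁻¹ = (5 : K)⁻¹ • conjTwoOne A := by
  rw [inv_def, det_fin_two_of, adjugate_fin_two_of, Ring.inverse_eq_inv', Matrix.mul_smul]
  norm_num [conjTwoOne]

lemma conjTwoOne_zmod_five (A : Matrix (Fin 2) (Fin 2) (ZMod 5)) :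
    conjTwoOne A = vecMulVec ![1, 2] ((![2, 1] ᵥ* A ⬝ᵥ ![2, 1]) • ![1, 2]) := by
  have hQ : (!![2, 1; -1, 2] : Matrix (Fin 2) (Fin 2) (ZMod 5)) = vecMulVec ![1, 2] ![2, 1] := by
    decide
  have hadjQ : (!![2, -1; 1, 2] : Matrix (Fin 2) (Fin 2) (ZMod 5)) = vecMulVec ![2, 1] ![1, 2] := by
    decide
  rw [conjTwoOne, hQ, hadjQ, vecMulVec_mul, vecMulVec_mul_vecMulVec]

lemma conjTwoOne_eq_zero_iff_zmod_five (A : Matrix (Fin 2) (Fin 2) (ZMod 5)) :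
    conjTwoOne A = 0 ↔ A 0 0 + 3 * A 0 1 + 3 * A 1 0 + 4 * A 1 1 = 0 := by
  have h5 : (5 : ZMod 5) = 0 := rfl
  have hform : ![2, 1] ᵥ* A ⬝ᵥ ![2, 1] = -(A 0 0 + 3 * A 0 1 + 3 * A 1 0 + 4 * A 1 1) := by
    simp only [dotProduct, vecMul, Fin.sum_univ_two, cons_val_zero, cons_val_one,
      cons_val_fin_one, one_mul, mul_one]
    linear_combination (A 0 0 + A 0 1 + A 1 0 + A 1 1) * h5
  rw [conjTwoOne_zmod_five, hform]
  refine ⟨fun h ↦ neg_eq_zero.mp ?_, fun h ↦ ?_⟩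
  · simpa [-neg_add_rev] using congrFun (congrFun h 0) 0
  · rw [h, neg_zero, zero_smul, vecMulVec_zero]

lemma exists_intCast_eq_inv_mul_intCast_iff {K : Type*} [Field K] [CharZero K] {m : ℕ}
    (hm : m ≠ 0) (a : ℤ) : (∃ k : ℤ, (m : K)⁻¹ * a = k) ↔ (a : ZMod m) = 0 := by
  have hm' : (m : K) ≠ 0 := Nat.cast_ne_zero.mpr hm
  rw [ZMod.intCast_zmod_eq_zero_iff_dvd]
  constructor
  · rintro ⟨k, hk⟩
    refine ⟨k, ?_⟩
    rw [inv_mul_eq_iff_eq_mul₀ hm'] at hk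
    exact_mod_cast hk
  · rintro ⟨k, rfl⟩
    exact ⟨k, by push_cast; field_simp⟩

lemma forall_exists_intCast_inv_smul_map_iff {m n K : Type*} [Field K] [CharZero K] {p : ℕ}
    (hp : p ≠ 0) (N : Matrix m n ℤ) :
    (∀ i j, ∃ k : ℤ, ((p : K)⁻¹ • N.map (Int.castRingHom K)) i j = k) ↔
      N.map (Int.castRingHom (ZMod p)) = 0 := by
  simp only [Matrix.smul_apply, map_apply, eq_intCast, smul_eq_mul,
    exists_intCast_eq_inv_mul_intCast_iff hp, ← Matrix.ext_iff, Matrix.zero_apply]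

theorem intersection_congruence_general (X Y Z W : ℤ) :
    let α : ℝ := (Real.sqrt 5 - 1) / 2
    let M₁ : Matrix (Fin 2) (Fin 2) ℝ := !![1, -α; α, 1]
    let M₂ : Matrix (Fin 2) (Fin 2) ℝ := !![α, -1; 1, α]
    let M : Matrix (Fin 2) (Fin 2) ℝ :=
      M₂⁻¹ * M₁ * !![(X : ℝ), Y; Z, W] * M₁⁻¹ * M₂
    ((∀ i j, ∃ n : ℤ, M i j = n) ↔ ((X + 3 * Y + 3 * Z + 4 * W : ℤ) : ZMod 5) = 0) ∧
    ((X : ZMod 5) = 1 → (W : ZMod 5) = 1 → (Y : ZMod 5) = 0 → (Z : ZMod 5) = 0 →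
      ∀ i j, ∃ n : ℤ, M i j = n) := by
  intro α M₁ M₂ M
  have hα : α ^ 2 + α = 1 := by
    linear_combination Real.sq_sqrt (show (0 : ℝ) ≤ 5 by norm_num) / 4
  have hα₀ : α ≠ 0 := by rintro h; simp [h] at hα
  have hM₂ : IsUnit M₂.det := by
    rw [det_fin_two_of, isUnit_iff_ne_zero]; nlinarith
  have hQ : IsUnit (!![2, 1; -1, 2] : Matrix (Fin 2) (Fin 2) ℝ).det := by
    rw [det_fin_two_of, isUnit_iff_ne_zero]; norm_num
  have hM : M = (5 : ℝ)⁻¹ • conjTwoOne !![(X : ℝ), Y; Z, W] :=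
    (inv_mul_mul_mul_inv_mul_eq_of_inv_mul_eq_smul hM₂ hQ (div_ne_zero hα₀ (by positivity))
      (inv_mul_eq_smul_of_sq_add_self hα) _).trans (mul_mul_inv_eq_inv_five_smul_conjTwoOne _)
  have hcast : !![(X : ℝ), Y; Z, W] = !![X, Y; Z, W].map (Int.castRingHom ℝ) := by
    ext i j; fin_cases i <;> fin_cases j <;> rfl
  have hiff : (∀ i j, ∃ n : ℤ, M i j = n) ↔ ((X + 3 * Y + 3 * Z + 4 * W : ℤ) : ZMod 5) = 0 := by
    have key := forall_exists_intCast_inv_smul_map_iff (K := ℝ) (p := 5) (by norm_num)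
      (conjTwoOne !![X, Y; Z, W])
    rw [Nat.cast_ofNat, map_conjTwoOne, ← hcast, ← hM] at key
    rw [key, map_conjTwoOne, conjTwoOne_eq_zero_iff_zmod_five]
    simp
  refine ⟨hiff, fun hX hW hY hZ ↦ hiff.2 ?_⟩
  push_cast
  rw [hX, hW, hY, hZ]
  rfl

/-- For integers `X, Y, Z, W` with `XW − YZ = 1`, the matrix
`M₂⁻¹ M₁ [[X,Y],[Z,W]] M₁⁻¹ M₂` has integer entries iff
`X + 3Y + 3Z + 4W ≡ 0 (mod 5)`; in particular this holds when
`X ≡ W ≡ 1` and `Y ≡ Z ≡ 0 (mod 5)`. -/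
theorem intersection_congruence (X Y Z W : ℤ) (hdet : X * W - Y * Z = 1) :
    let α : ℝ := (Real.sqrt 5 - 1) / 2
    let M₁ : Matrix (Fin 2) (Fin 2) ℝ := !![1, -α; α, 1]
    let M₂ : Matrix (Fin 2) (Fin 2) ℝ := !![α, -1; 1, α]
    let M : Matrix (Fin 2) (Fin 2) ℝ :=
      M₂⁻¹ * M₁ * !![(X : ℝ), Y; Z, W] * M₁⁻¹ * M₂
    ((∀ i j, ∃ n : ℤ, M i j = n) ↔ ((X + 3 * Y + 3 * Z + 4 * W : ℤ) : ZMod 5) = 0) ∧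
    ((X : ZMod 5) = 1 → (W : ZMod 5) = 1 → (Y : ZMod 5) = 0 → (Z : ZMod 5) = 0 →
      ∀ i j, ∃ n : ℤ, M i j = n) :=
  intersection_congruence_general X Y Z W
end
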